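/- Let k be an algebraically closed field of characteristic p, let n ≥ 1, and set q := (1+u)^{p^{n−1}} − 1 ∈ 𝔖 and d := Σ_{i=0}^{p−1} (1+u)^{i·p^{n−1}} ∈ 𝔖 (so that d·q = (1+u)^{p^n} − 1; d is the Eisenstein polynomial of ζ_{p^n} − 1). Then for every m with 1 ≤ m ≤ n, the kernel of the additive endomorphism x ↦ φ(x) − d·x of 𝔖/p^m𝔖 (well defined since φ(p^m𝔖) ⊆ p^m𝔖) is exactly the cyclic subgroup generated by the class of q, and this subgroup is isomorphic to ℤ/p^m (the class of q has additive order p^m). Equivalently there is an exact sequence 0 → (ℤ/p^m)·q → 𝔖/p^m →^{φ−d} 𝔖/p^m. -/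

import Mathlib

open PowerSeries
set_option linter.unusedSectionVars false

section Aux

variable {p : ℕ} [Fact p.Prime] {k : Type*} [Field k] [IsAlgClosed k] [CharP k p]

private lemma charP_PS : CharP (PowerSeries k) p :=
  charP_of_injective_ringHom (f := PowerSeries.C (R := k))
    (fun a b h => by simpa using congrArg (PowerSeries.constantCoeff) h) p

/-- Fixed points of `x ↦ x^p` in `k` are images of naturals below `p`. -/
private lemma fix_mem (c : k) (hc : c ^ p = c) : ∃ i : ℕ, i < p ∧ c = (i : k) := by
  classical
  have hp1 : 1 < p := (Fact.out : p.Prime).one_lt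
  set f : Polynomial k := Polynomial.X ^ p - Polynomial.X with hf
  have hcoeff : f.coeff p = 1 := by
    simp [hf, Polynomial.coeff_X_pow, Polynomial.coeff_X]
    omega
  have hf0 : f ≠ 0 := fun h => by simp [h] at hcoeff
  have hdeg : f.natDegree ≤ p := by
    refine le_trans (Polynomial.natDegree_sub_le _ _) ?_
    simp [Polynomial.natDegree_X_pow, Polynomial.natDegree_X]
    omega
  have hroot : ∀ x : k, x ^ p = x → x ∈ f.roots.toFinset := by
    intro x hx
    rw [Multiset.mem_toFinset, Polynomial.mem_roots hf0]
    simp [hf, Polynomial.IsRoot, sub_eq_zero, hx]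
  have hnatfix : ∀ i : ℕ, ((i : k)) ^ p = (i : k) := by
    intro i
    have : (i : k) ^ p = frobenius k p (i : k) := rfl
    rw [this, map_natCast]
  set s : Finset k := (Finset.range p).image (Nat.cast : ℕ → k) with hs
  have hscard : s.card = p := by
    rw [hs, Finset.card_image_of_injOn, Finset.card_range]
    rw [Finset.coe_range]
    exact CharP.natCast_injOn_Iio k p
  by_contra hcon
  have hcns : c ∉ s := by
    intro hcs
    rw [hs, Finset.mem_image] at hcs
    obtain ⟨i, hi, rfl⟩ := hcs
    exact hcon ⟨i, Finset.mem_range.mp hi, rfl⟩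
  have hsub : insert c s ⊆ f.roots.toFinset := by
    intro x hx
    rcases Finset.mem_insert.mp hx with rfl | hx
    · exact hroot x hc
    · rw [hs, Finset.mem_image] at hx
      obtain ⟨i, _, rfl⟩ := hx
      exact hroot _ (hnatfix i)
  have h1 : (insert c s).card = p + 1 := by
    rw [Finset.card_insert_of_notMem hcns, hscard]
  have h2 : (insert c s).card ≤ f.roots.toFinset.card := Finset.card_le_card hsub
  have h3 : f.roots.toFinset.card ≤ Multiset.card f.roots := Multiset.toFinset_card_le _
  have h4 := Polynomial.card_roots' f
  omega

end Aux

section Aux2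

private lemma trunc_decomp {A : Type*} [CommRing A] (f : PowerSeries A) (M : ℕ) :
    ∃ g, f = (∑ i ∈ Finset.range M, PowerSeries.C (coeff i f) * X ^ i) + X ^ M * g := by
  have hdvd : (X : PowerSeries A) ^ M ∣
      f - ∑ i ∈ Finset.range M, PowerSeries.C (coeff i f) * X ^ i := by
    rw [X_pow_dvd_iff]
    intro m hm
    rw [map_sub, map_sum]
    rw [Finset.sum_eq_single_of_mem m (Finset.mem_range.mpr hm)]
    · rw [coeff_C_mul, coeff_X_pow, if_pos rfl, mul_one, sub_self]
    · intro i _ hi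
      rw [coeff_C_mul, coeff_X_pow, if_neg (fun h => hi h.symm), mul_zero]
  obtain ⟨g, hg⟩ := hdvd
  exact ⟨g, by rw [← hg]; ring⟩

end Aux2

section Aux3

variable {p : ℕ} [Fact p.Prime] {k : Type*} [Field k] [IsAlgClosed k] [CharP k p]

private lemma coeff_pow_p (y : PowerSeries k) (j : ℕ) :
    coeff j (y ^ p) = if p ∣ j then (coeff (j / p) y) ^ p else 0 := by
  classical
  haveI : CharP (PowerSeries k) p :=
    charP_of_injective_ringHom (f := PowerSeries.C (R := k))
      (fun a b h => by simpa using congrArg (PowerSeries.constantCoeff) h) p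
  have hp1 : 1 ≤ p := (Fact.out : p.Prime).one_lt.le
  set N := j + 1 with hN
  obtain ⟨g, hg⟩ := trunc_decomp y N
  have hyp : y ^ p = (∑ i ∈ Finset.range N, PowerSeries.C ((coeff i y) ^ p) * X ^ (p * i))
      + X ^ (p * N) * g ^ p := by
    conv_lhs => rw [hg]
    rw [add_pow_char, sum_pow_char]
    congr 1
    · refine Finset.sum_congr rfl fun i _ => ?_
      rw [mul_pow, ← map_pow, ← pow_mul, mul_comm i p]
    · rw [mul_pow, ← pow_mul, mul_comm N p]
  rw [hyp, map_add]
  have h2 : coeff j (X ^ (p * N) * g ^ p) = 0 := by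
    refine X_pow_dvd_iff.mp (dvd_mul_right _ _) j ?_
    calc j < N := by omega
    _ ≤ p * N := Nat.le_mul_of_pos_left N (by omega)
  rw [h2, add_zero, map_sum]
  by_cases hpj : p ∣ j
  · obtain ⟨i0, rfl⟩ := hpj
    have hi0 : i0 < N := by
      have : i0 ≤ p * i0 := Nat.le_mul_of_pos_left i0 (by omega)
      omega
    rw [Finset.sum_eq_single_of_mem i0 (Finset.mem_range.mpr hi0)]
    · rw [coeff_C_mul, coeff_X_pow, if_pos rfl, mul_one, if_pos ⟨i0, rfl⟩,
        Nat.mul_div_cancel_left i0 (by omega)]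
    · intro i _ hi
      have hne : ¬(p * i0 = p * i) := fun h =>
        hi (Nat.eq_of_mul_eq_mul_left (show 0 < p by omega) h).symm
      rw [coeff_C_mul, coeff_X_pow, if_neg hne, mul_zero]
  · rw [Finset.sum_eq_zero, if_neg hpj]
    intro i _
    rw [coeff_C_mul, coeff_X_pow, if_neg (fun h => hpj ⟨i, h⟩), mul_zero]

private lemma coeff_phi
    (φ : PowerSeries (WittVector p k) →+* PowerSeries (WittVector p k))
    (hφu : φ X = X ^ p)
    (hφC : ∀ a : WittVector p k,
      φ (PowerSeries.C a) = PowerSeries.C (WittVector.frobenius a))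
    (f : PowerSeries (WittVector p k)) (j : ℕ) :
    coeff j (φ f) =
      if p ∣ j then WittVector.frobenius (coeff (j / p) f) else 0 := by
  classical
  have hp1 : 1 ≤ p := (Fact.out : p.Prime).one_lt.le
  set N := j + 1 with hN
  obtain ⟨g, hg⟩ := trunc_decomp f N
  have hyp : φ f = (∑ i ∈ Finset.range N,
      PowerSeries.C (WittVector.frobenius (coeff i f)) * X ^ (p * i))
      + X ^ (p * N) * φ g := by
    conv_lhs => rw [hg]
    rw [map_add, map_sum]
    congr 1
    swap
    · rw [map_mul, map_pow, hφu, ← pow_mul]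
    refine Finset.sum_congr rfl fun i _ => ?_
    rw [map_mul, map_pow, hφu, hφC, ← pow_mul]
  rw [hyp, map_add]
  have h2 : coeff j (X ^ (p * N) * φ g) = 0 := by
    refine X_pow_dvd_iff.mp (dvd_mul_right _ _) j ?_
    calc j < N := by omega
    _ ≤ p * N := Nat.le_mul_of_pos_left N (by omega)
  rw [h2, add_zero, map_sum]
  by_cases hpj : p ∣ j
  · obtain ⟨i0, rfl⟩ := hpj
    have hi0 : i0 < N := by
      have : i0 ≤ p * i0 := Nat.le_mul_of_pos_left i0 (by omega)
      omega
    rw [Finset.sum_eq_single_of_mem i0 (Finset.mem_range.mpr hi0)]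
    · rw [coeff_C_mul, coeff_X_pow, if_pos rfl, mul_one, if_pos ⟨i0, rfl⟩,
        Nat.mul_div_cancel_left i0 (by omega)]
    · intro i _ hi
      have hne : ¬(p * i0 = p * i) := fun h =>
        hi (Nat.eq_of_mul_eq_mul_left (show 0 < p by omega) h).symm
      rw [coeff_C_mul, coeff_X_pow, if_neg hne, mul_zero]
  · rw [Finset.sum_eq_zero, if_neg hpj]
    intro i _
    rw [coeff_C_mul, coeff_X_pow, if_neg (fun h => hpj ⟨i, h⟩), mul_zero]

end Aux3

section Aux4

variable {p : ℕ} [Fact p.Prime] {k : Type*} [Field k] [IsAlgClosed k] [CharP k p]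

private lemma res_eq_zero_iff (a : WittVector p k) :
    WittVector.constantCoeff a = 0 ↔ (p : WittVector p k) ∣ a := by
  constructor
  · intro h
    have h0 : a.coeff 0 = 0 := h
    set y : WittVector p k := WittVector.mk p fun n => a.coeff (n + 1) with hy
    have hay : a = WittVector.verschiebung y := by
      apply WittVector.ext
      intro n
      cases n with
      | zero => rw [WittVector.verschiebung_coeff_zero, h0]
      | succ n => rw [WittVector.verschiebung_coeff_succ]; rfl
    obtain ⟨z, hz⟩ := (WittVector.frobenius_bijective p k).2 y
    refine ⟨z, ?_⟩
    rw [hay, ← hz, WittVector.verschiebung_frobenius, mul_comm]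
  · rintro ⟨b, rfl⟩
    show (↑p * b).coeff 0 = 0
    rw [mul_comm]
    exact WittVector.mul_charP_coeff_zero b

private lemma C_dvd_iff {A : Type*} [CommRing A] (r : A) (f : PowerSeries A) :
    PowerSeries.C r ∣ f ↔ ∀ i, r ∣ coeff i f := by
  constructor
  · rintro ⟨g, rfl⟩ i
    exact ⟨coeff i g, by rw [coeff_C_mul]⟩
  · intro h
    refine ⟨PowerSeries.mk fun i => (h i).choose, ?_⟩
    ext i
    rw [coeff_C_mul, coeff_mk]
    exact (h i).choose_spec

private lemma pi_eq_zero_iff (f : PowerSeries (WittVector p k)) :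
    PowerSeries.map (WittVector.constantCoeff : WittVector p k →+* k) f = 0 ↔
      (p : PowerSeries (WittVector p k)) ∣ f := by
  have hp : (p : PowerSeries (WittVector p k)) =
      PowerSeries.C (p : WittVector p k) := by rw [map_natCast]
  rw [hp, C_dvd_iff]
  constructor
  · intro h i
    rw [← res_eq_zero_iff]
    have := congrArg (coeff i) h
    rwa [coeff_map, map_zero] at this
  · intro h
    ext i
    rw [coeff_map, map_zero]
    exact (res_eq_zero_iff _).mpr (h i)

end Aux4

section Aux5

variable {p : ℕ} [Fact p.Prime] {k : Type*} [Field k] [IsAlgClosed k] [CharP k p]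

private lemma order_pow' (y : PowerSeries k) (j : ℕ) :
    order (y ^ j) = (j : ℕ∞) * order y := by
  induction j with
  | zero => simp [order_one]
  | succ j ih =>
    rw [pow_succ, order_mul, ih]
    push_cast
    ring

private lemma solve_base (N : ℕ) (hN : 1 ≤ N) (y : PowerSeries k)
    (hy : y ^ p = X ^ ((p - 1) * N) * y) :
    ∃ c : ℕ, c < p ∧ y = (c : PowerSeries k) * X ^ N := by
  haveI : CharP (PowerSeries k) p :=
    charP_of_injective_ringHom (f := PowerSeries.C (R := k))
      (fun a b h => by simpa using congrArg (PowerSeries.constantCoeff) h) p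
  have hp1 : 1 < p := (Fact.out : p.Prime).one_lt
  by_cases hy0 : y = 0
  · exact ⟨0, by omega, by simp [hy0]⟩
  -- order computation
  obtain ⟨t, ht⟩ : ∃ t : ℕ, order y = (t : ℕ∞) := by
    have := order_finite_iff_ne_zero.mpr hy0
    obtain ⟨t, ht⟩ := WithTop.ne_top_iff_exists.mp this.ne
    exact ⟨t, ht.symm⟩
  have horder : (p : ℕ∞) * t = ((p - 1) * N : ℕ) + t := by
    have h1 := congrArg order hy
    rw [order_pow', order_mul, order_X_pow, ht] at h1
    exact_mod_cast h1
  have htN : t = N := by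
    have h2 : ((p * t : ℕ) : ℕ∞) = (((p - 1) * N + t : ℕ) : ℕ∞) := by
      push_cast
      exact horder
    have h3 : p * t = (p - 1) * N + t := Nat.cast_injective h2
    have hps : (p - 1) * t + t = p * t := by
      have hp' : p - 1 + 1 = p := by omega
      calc (p - 1) * t + t = ((p - 1) + 1) * t := by ring
      _ = p * t := by rw [hp']
    have h4 : (p - 1) * t + t = (p - 1) * N + t := hps.trans h3
    have h5 : (p - 1) * t = (p - 1) * N := by omega
    exact Nat.eq_of_mul_eq_mul_left (by omega) h5
  -- y = X^N * g
  obtain ⟨g, hg⟩ : (X : PowerSeries k) ^ N ∣ y := by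
    rw [X_pow_dvd_iff]
    intro m hm
    exact coeff_of_lt_order m (by rw [ht, htN]; exact_mod_cast hm)
  have hXNp : (X : PowerSeries k) ^ (N * p) ≠ 0 := pow_ne_zero _ X_ne_zero
  have hgp : g ^ p = g := by
    apply mul_left_cancel₀ hXNp
    have : (X ^ N * g : PowerSeries k) ^ p = X ^ ((p - 1) * N) * (X ^ N * g) := by
      rw [← hg]; exact hy
    calc X ^ (N * p) * g ^ p = (X ^ N * g) ^ p := by rw [mul_pow, pow_mul]
    _ = X ^ ((p - 1) * N) * (X ^ N * g) := this
    _ = X ^ (N * p) * g := by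
        rw [← mul_assoc, ← pow_add]
        have hp' : p - 1 + 1 = p := by omega
        have hexp : (p - 1) * N + N = N * p := by
          calc (p - 1) * N + N = ((p - 1) + 1) * N := by ring
          _ = N * p := by rw [hp', mul_comm]
        rw [hexp]
  set c := PowerSeries.constantCoeff g with hc
  have hcp : c ^ p = c := by
    have := congrArg (PowerSeries.constantCoeff) hgp
    rwa [map_pow] at this
  have hgC : g = PowerSeries.C c := by
    set h := g - PowerSeries.C c with hh
    have hhp : h ^ p = h := by
      rw [hh, sub_pow_char, hgp, ← map_pow, hcp]
    have hh0 : PowerSeries.constantCoeff h = 0 := by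
      rw [hh, map_sub, PowerSeries.constantCoeff_C]
      exact sub_self c
    have hzero : h = 0 := by
      by_contra hne
      obtain ⟨t', ht'⟩ : ∃ t' : ℕ, order h = (t' : ℕ∞) := by
        have := order_finite_iff_ne_zero.mpr hne
        obtain ⟨t', ht'⟩ := WithTop.ne_top_iff_exists.mp this.ne
        exact ⟨t', ht'.symm⟩
      have he : (p : ℕ∞) * t' = t' := by
        have := congrArg order hhp
        rw [order_pow', ht'] at this
        exact_mod_cast this
      have he2 : p * t' = t' := by
        have : ((p * t' : ℕ) : ℕ∞) = (t' : ℕ∞) := by push_cast; exact he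
        exact_mod_cast this
      have ht'0 : t' = 0 := by
        have h3 : 2 * t' ≤ p * t' := Nat.mul_le_mul_right t' hp1
        rw [he2] at h3
        omega
      have hcoeff := (order_eq_nat.mp (by rw [ht'])).1
      rw [ht'0] at hcoeff
      rw [← coeff_zero_eq_constantCoeff] at hh0
      exact hcoeff hh0
    rw [← sub_eq_zero, ← hh]
    exact hzero
  obtain ⟨i, hip, hci⟩ := fix_mem c hcp
  refine ⟨i, hip, ?_⟩
  rw [hg, hgC, hci, map_natCast, mul_comm]

end Aux5

set_option linter.unusedVariables false




/-- **Lemma 6.7.** Let `k` be an algebraically closed field of characteristic `p`,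
`𝔖 = W(k)⟦u⟧` with Frobenius lift `φ`, and for `n ≥ 1` set `q = (1+u)^{p^{n-1}} - 1` and
`d = Σ_{i=0}^{p-1} (1+u)^{i·p^{n-1}}` (so `d·q = (1+u)^{p^n} - 1`).  For every `1 ≤ m ≤ n`, the
kernel of `x ↦ φ(x) - d·x` on `𝔖/p^m` is exactly the cyclic subgroup generated by the class of
`q`, and this class has additive order `p^m` (so the kernel is `ℤ/p^m · q`). -/
theorem stmt14 (p : ℕ) [Fact p.Prime] (k : Type*) [Field k] [IsAlgClosed k] [CharP k p]
    (φ : PowerSeries (WittVector p k) →+* PowerSeries (WittVector p k))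
    (hφu : φ PowerSeries.X = PowerSeries.X ^ p)
    (hφC : ∀ a : WittVector p k,
      φ (PowerSeries.C a) = PowerSeries.C (WittVector.frobenius a))
    (n : ℕ) (hn : 1 ≤ n)
    (q d : PowerSeries (WittVector p k))
    (hq : q = (1 + PowerSeries.X) ^ p ^ (n - 1) - 1)
    (hd : d = ∑ i ∈ Finset.range p, (1 + PowerSeries.X) ^ (i * p ^ (n - 1))) :
    ∀ m : ℕ, 1 ≤ m → m ≤ n →
      (∀ x : PowerSeries (WittVector p k),
        φ x - d * x ∈ Ideal.span {((p : PowerSeries (WittVector p k)) ^ m)} ↔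
        ∃ c : ℤ, x - (c : PowerSeries (WittVector p k)) * q ∈
          Ideal.span {((p : PowerSeries (WittVector p k)) ^ m)}) ∧
      addOrderOf (Ideal.Quotient.mk
        (Ideal.span {((p : PowerSeries (WittVector p k)) ^ m)}) q) = p ^ m := by

  classical
  haveI : CharP (PowerSeries k) p :=
    charP_of_injective_ringHom (f := PowerSeries.C (R := k))
      (fun a b h => by simpa using congrArg (PowerSeries.constantCoeff) h) p
  have hp1 : 1 < p := (Fact.out : p.Prime).one_lt
  have hApos : 1 ≤ p ^ (n - 1) := Nat.one_le_pow _ _ (by omega)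
  have hAp : p ^ (n - 1) * p = p ^ n := by
    rw [← pow_succ]
    congr 1
    omega
  have hpS0 : (p : PowerSeries (WittVector p k)) ≠ 0 := fun h =>
    WittVector.p_nonzero p k (by simpa using congrArg (PowerSeries.constantCoeff) h)
  have hXA0 : (X : PowerSeries k) ^ (p ^ (n - 1)) ≠ 0 := pow_ne_zero _ X_ne_zero
  -- d * q = (1+X)^(p^n) - 1
  have hqd : d * q = (1 + X) ^ (p ^ n) - 1 := by
    rw [hq, hd]
    calc (∑ i ∈ Finset.range p, (1 + X : PowerSeries (WittVector p k)) ^ (i * p ^ (n - 1)))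
          * ((1 + X) ^ p ^ (n - 1) - 1)
        = (∑ i ∈ Finset.range p, ((1 + X : PowerSeries (WittVector p k)) ^ p ^ (n - 1)) ^ i)
          * ((1 + X) ^ p ^ (n - 1) - 1) := by
          congr 1
          refine Finset.sum_congr rfl fun i _ => ?_
          rw [← pow_mul, mul_comm]
    _ = ((1 + X : PowerSeries (WittVector p k)) ^ p ^ (n - 1)) ^ p - 1 := geom_sum_mul _ p
    _ = (1 + X) ^ (p ^ n) - 1 := by rw [← pow_mul, hAp]
  have hφq_eq : φ q = (1 + X ^ p) ^ p ^ (n - 1) - 1 := by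
    rw [hq, map_sub, map_pow, map_add, map_one, hφu]
  -- p^n ∣ φ q - d q
  have hdiff : (p : PowerSeries (WittVector p k)) ^ n ∣ φ q - d * q := by
    have h1 : (p : PowerSeries (WittVector p k)) ∣ (1 + X ^ p) - (1 + X) ^ p := by
      rw [← pi_eq_zero_iff]
      rw [map_sub, map_add, map_one, map_pow, map_pow, map_add, map_one, PowerSeries.map_X,
        add_pow_char]
      simp
    have h2 := dvd_sub_pow_of_dvd_sub h1 (n - 1)
    rw [(show n - 1 + 1 = n by omega)] at h2
    rw [hφq_eq, hqd]
    have h3 : (((1 + X : PowerSeries (WittVector p k)) ^ p) ^ p ^ (n - 1)) = (1 + X) ^ p ^ n := by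
      rw [← pow_mul, mul_comm, hAp]
    have h4 : (1 + X ^ p) ^ p ^ (n - 1) - 1 - ((1 + X : PowerSeries (WittVector p k)) ^ p ^ n - 1)
        = (1 + X ^ p) ^ p ^ (n - 1) - ((1 + X) ^ p) ^ p ^ (n - 1) := by
      rw [h3]; ring
    rw [h4]
    exact h2
  -- the reduction map interacts with φ
  have hπφ : ∀ f, PowerSeries.map (WittVector.constantCoeff : WittVector p k →+* k) (φ f)
      = (PowerSeries.map (WittVector.constantCoeff : WittVector p k →+* k) f) ^ p := by
    intro f
    ext j
    rw [coeff_map, coeff_phi φ hφu hφC f j,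
      coeff_pow_p (PowerSeries.map (WittVector.constantCoeff : WittVector p k →+* k) f) j]
    split_ifs with h
    · rw [coeff_map]
      simp [WittVector.coeff_frobenius_charP]
    · rw [map_zero]
  have hπq : PowerSeries.map (WittVector.constantCoeff : WittVector p k →+* k) q
      = X ^ p ^ (n - 1) := by
    rw [hq, map_sub, map_pow, map_add, map_one, PowerSeries.map_X,
      add_pow_char_pow, one_pow, add_sub_cancel_left]
  have hπd : PowerSeries.map (WittVector.constantCoeff : WittVector p k →+* k) d
      = X ^ ((p - 1) * p ^ (n - 1)) := by
    have hexp : (p - 1) * p ^ (n - 1) + p ^ (n - 1) = p ^ n := by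
      calc (p - 1) * p ^ (n - 1) + p ^ (n - 1) = ((p - 1) + 1) * p ^ (n - 1) := by ring
      _ = p * p ^ (n - 1) := by rw [show p - 1 + 1 = p by omega]
      _ = p ^ n := by rw [mul_comm, hAp]
    have hcan : PowerSeries.map (WittVector.constantCoeff : WittVector p k →+* k) d
        * X ^ p ^ (n - 1) = X ^ ((p - 1) * p ^ (n - 1)) * X ^ p ^ (n - 1) := by
      calc PowerSeries.map (WittVector.constantCoeff : WittVector p k →+* k) d
            * X ^ p ^ (n - 1)
          = PowerSeries.map (WittVector.constantCoeff : WittVector p k →+* k) (d * q) := by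
            rw [map_mul, hπq]
      _ = X ^ p ^ n := by
            rw [hqd, map_sub, map_pow, map_add, map_one, PowerSeries.map_X,
              add_pow_char_pow, one_pow, add_sub_cancel_left]
      _ = X ^ ((p - 1) * p ^ (n - 1)) * X ^ p ^ (n - 1) := by rw [← pow_add, hexp]
    exact mul_right_cancel₀ hXA0 hcan
  -- base case of the kernel computation
  have hbase : ∀ x, (p : PowerSeries (WittVector p k)) ∣ φ x - d * x →
      ∃ c : ℕ, (p : PowerSeries (WittVector p k)) ∣ x - (c : PowerSeries (WittVector p k)) * q := by
    intro x hx
    have h0 : PowerSeries.map (WittVector.constantCoeff : WittVector p k →+* k) (φ x - d * x)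
        = 0 := (pi_eq_zero_iff _).mpr hx
    rw [map_sub, map_mul, hπφ, hπd] at h0
    have heq : (PowerSeries.map (WittVector.constantCoeff : WittVector p k →+* k) x) ^ p
        = X ^ ((p - 1) * p ^ (n - 1))
          * PowerSeries.map (WittVector.constantCoeff : WittVector p k →+* k) x :=
      sub_eq_zero.mp h0
    obtain ⟨c, hcp, hcy⟩ := solve_base (p ^ (n - 1)) hApos _ heq
    refine ⟨c, (pi_eq_zero_iff _).mp ?_⟩
    rw [map_sub, map_mul, map_natCast, hπq, hcy, sub_self]
  -- easy inclusion
  have heasy : ∀ m, m ≤ n → ∀ x : PowerSeries (WittVector p k),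
      (∃ c : ℤ, (p : PowerSeries (WittVector p k)) ^ m ∣ x - (c : PowerSeries (WittVector p k)) * q)
      → (p : PowerSeries (WittVector p k)) ^ m ∣ φ x - d * x := by
    rintro m hmn x ⟨c, y, hy⟩
    have hx' : x = (c : PowerSeries (WittVector p k)) * q
        + (p : PowerSeries (WittVector p k)) ^ m * y := by linear_combination hy
    have hsplit : φ x - d * x = (c : PowerSeries (WittVector p k)) * (φ q - d * q)
        + (p : PowerSeries (WittVector p k)) ^ m * (φ y - d * y) := by
      rw [hx']
      simp only [map_add, map_mul, map_pow, map_intCast, map_natCast]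
      ring
    rw [hsplit]
    exact dvd_add (((pow_dvd_pow _ hmn).trans hdiff).mul_left _) (dvd_mul_right _ _)
  -- hard inclusion, by induction
  have hhard : ∀ m, 1 ≤ m → m ≤ n → ∀ x : PowerSeries (WittVector p k),
      (p : PowerSeries (WittVector p k)) ^ m ∣ φ x - d * x →
      ∃ c : ℤ, (p : PowerSeries (WittVector p k)) ^ m ∣
        x - (c : PowerSeries (WittVector p k)) * q := by
    intro m hm
    induction m, hm using Nat.le_induction with
    | base =>
      intro _ x hx
      rw [pow_one] at hx
      obtain ⟨c, hc⟩ := hbase x hx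
      refine ⟨(c : ℤ), ?_⟩
      rw [pow_one]
      have hcc : (((c : ℤ) : PowerSeries (WittVector p k)))
          = ((c : ℕ) : PowerSeries (WittVector p k)) := by norm_cast
      rw [hcc]
      exact hc
    | succ m hm ih =>
      intro hmn x hx
      obtain ⟨c, y, hy⟩ := ih (by omega) x ((pow_dvd_pow _ (Nat.le_succ m)).trans hx)
      have hsplit : φ x - d * x = (c : PowerSeries (WittVector p k)) * (φ q - d * q)
          + (p : PowerSeries (WittVector p k)) ^ m * (φ y - d * y) := by
        have hx' : x = (c : PowerSeries (WittVector p k)) * q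
            + (p : PowerSeries (WittVector p k)) ^ m * y := by linear_combination hy
        rw [hx']
        simp only [map_add, map_mul, map_pow, map_intCast, map_natCast]
        ring
      have h1 : (p : PowerSeries (WittVector p k)) ^ (m + 1) ∣
          (p : PowerSeries (WittVector p k)) ^ m * (φ y - d * y) := by
        have h2 : (p : PowerSeries (WittVector p k)) ^ (m + 1) ∣
            (c : PowerSeries (WittVector p k)) * (φ q - d * q) :=
          ((pow_dvd_pow _ hmn).trans hdiff).mul_left _
        have h3 := dvd_sub hx h2
        rwa [hsplit, add_sub_cancel_left] at h3
      have h4 : (p : PowerSeries (WittVector p k)) ∣ φ y - d * y := by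
        obtain ⟨t, ht⟩ := h1
        exact ⟨t, mul_left_cancel₀ (pow_ne_zero m hpS0) (by rw [ht, pow_succ]; ring)⟩
      obtain ⟨c', z, hz⟩ := hbase y h4
      refine ⟨c + (p : ℤ) ^ m * (c' : ℤ), ⟨z, ?_⟩⟩
      push_cast
      linear_combination hy + (p : PowerSeries (WittVector p k)) ^ m * hz
  -- divisibility of integer multiples of q
  have hdvd_cast : ∀ s j : ℕ,
      (p : PowerSeries (WittVector p k)) ^ s ∣ (j : PowerSeries (WittVector p k)) * q →
      p ^ s ∣ j := by
    intro s
    induction s with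
    | zero => simp
    | succ s ih =>
      intro j hj
      have hpj : p ∣ j := by
        have h1 : (p : PowerSeries (WittVector p k)) ∣ (j : PowerSeries (WittVector p k)) * q :=
          (dvd_pow_self _ (Nat.succ_ne_zero s)).trans hj
        have h0 := (pi_eq_zero_iff _).mpr h1
        rw [map_mul, map_natCast, hπq] at h0
        have hj0 : (j : PowerSeries k) = 0 := by
          rcases mul_eq_zero.mp h0 with h | h
          · exact h
          · exact absurd h hXA0
        exact (CharP.cast_eq_zero_iff (PowerSeries k) p j).mp hj0
      obtain ⟨j', rfl⟩ := hpj
      have hstep : (p : PowerSeries (WittVector p k)) ^ s ∣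
          (j' : PowerSeries (WittVector p k)) * q := by
        obtain ⟨t, ht⟩ := hj
        refine ⟨t, mul_left_cancel₀ hpS0 ?_⟩
        push_cast at ht ⊢
        linear_combination ht
      rw [pow_succ']
      exact mul_dvd_mul_left p (ih j' hstep)
  -- conclusion
  intro m hm1 hmn
  constructor
  · intro x
    rw [Ideal.mem_span_singleton]
    constructor
    · intro h
      obtain ⟨c, hc⟩ := hhard m hm1 hmn x h
      exact ⟨c, Ideal.mem_span_singleton.mpr hc⟩
    · rintro ⟨c, hc⟩
      exact heasy m hmn x ⟨c, Ideal.mem_span_singleton.mp hc⟩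
  · have hIq : ∀ j : ℕ,
        (j • (Ideal.Quotient.mk (Ideal.span {((p : PowerSeries (WittVector p k)) ^ m)}) q) = 0
          ↔ p ^ m ∣ j) := by
      intro j
      have hmk : j • (Ideal.Quotient.mk (Ideal.span {((p : PowerSeries (WittVector p k)) ^ m)}) q)
          = Ideal.Quotient.mk (Ideal.span {((p : PowerSeries (WittVector p k)) ^ m)})
            ((j : PowerSeries (WittVector p k)) * q) := by
        rw [nsmul_eq_mul,
          ← map_natCast (Ideal.Quotient.mk (Ideal.span {((p : PowerSeries (WittVector p k)) ^ m)})) j,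
          ← map_mul]
      rw [hmk, Ideal.Quotient.eq_zero_iff_mem, Ideal.mem_span_singleton]
      constructor
      · exact hdvd_cast m j
      · rintro ⟨t, rfl⟩
        exact ⟨(t : PowerSeries (WittVector p k)) * q, by push_cast; ring⟩
    rw [addOrderOf_eq_iff (by positivity)]
    constructor
    · exact (hIq (p ^ m)).mpr dvd_rfl
    · intro j hj hj0 hcon
      have hd1 := (hIq j).mp hcon
      have := Nat.le_of_dvd hj0 hd1
      omega
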